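/- arXiv:math/0109094 — 4 statements merged into one kernel-verified Lean document; each statement's English description precedes it below -/
import Mathlib

section
/- For every integer e ≥ 1, the piano ring R̃e(k) is a W(k)-subalgebra of the power-series ring B(k)[[T]]: it contains the subring W(k)[[T]] (in particular the elements 1 and T) and is closed under addition, negation and multiplication. -/
/-!
Piano rings (A. Vasiu, "Shimura varieties and the Mumford–Tate conjecture", §2.1).

`W(k)` is the ring of `p`-typical Witt vectors of a perfect field `k` of characteristic `p`,
`B(k) = W(k)[1/p]` its fraction field.  For `e ≥ 1`, the piano ring `R̃e(k)` of resonance `e`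
consists of the power series `Σ aₙ Tⁿ ∈ B(k)[[T]]` with `aₙ ⬝ (⌊n/e⌋)! ∈ W(k)` for all `n`,
and the piano ring `Re(k)` of convergent resonance `e` consists of those for which moreover
`bₙ := aₙ ⬝ (⌊n/e⌋)!` converges `p`-adically to `0`.
-/

noncomputable section

open PowerSeries

variable (p : ℕ) [Fact p.Prime] (k : Type*) [Field k] [CharP k p] [PerfectRing k p]

/-- `x` lies in the canonical image of `W(k)` inside `B(k)`. -/
def InW (x : FractionRing (WittVector p k)) : Prop :=
  ∃ w : WittVector p k,
    algebraMap (WittVector p k) (FractionRing (WittVector p k)) w = x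

/-- The piano ring `R̃e(k)` of resonance `e`: power series `Σ aₙ Tⁿ` over `B(k)` with
`aₙ ⬝ (⌊n/e⌋)! ∈ W(k)` for all `n`. -/
def pianoTilde (e : ℕ) : Set (PowerSeries (FractionRing (WittVector p k))) :=
  {f | ∀ n : ℕ,
    InW p k (PowerSeries.coeff n f * (Nat.factorial (n / e) : FractionRing (WittVector p k)))}

/-- The piano ring `Re(k)` of convergent resonance `e`: power series `Σ aₙ Tⁿ` over `B(k)`
with `bₙ := aₙ ⬝ (⌊n/e⌋)! ∈ W(k)` for all `n` and `bₙ → 0` `p`-adically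
(for every `m` eventually `bₙ ∈ pᵐ W(k)`). -/
def pianoR (e : ℕ) : Set (PowerSeries (FractionRing (WittVector p k))) :=
  {f | (∀ n : ℕ,
      InW p k (PowerSeries.coeff n f * (Nat.factorial (n / e) : FractionRing (WittVector p k)))) ∧
    ∀ m : ℕ, ∃ N : ℕ, ∀ n ≥ N, ∃ w : WittVector p k,
      algebraMap (WittVector p k) (FractionRing (WittVector p k)) ((p : WittVector p k) ^ m * w)
        = PowerSeries.coeff n f * (Nat.factorial (n / e) : FractionRing (WittVector p k))}

/-- For every `e ≥ 1`, the piano ring `R̃e(k)` is a `W(k)`-subalgebra of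
`B(k)[[T]]`: it contains the subring `W(k)[[T]]` (in particular `1` and `T`), and is closed
under addition, negation and multiplication. -/
theorem pianoTilde_isSubalgebra (e : ℕ) (he : 1 ≤ e) :
    (∀ g : PowerSeries (WittVector p k),
      PowerSeries.map (algebraMap (WittVector p k) (FractionRing (WittVector p k))) g
        ∈ pianoTilde p k e) ∧
    (1 : PowerSeries (FractionRing (WittVector p k))) ∈ pianoTilde p k e ∧
    (PowerSeries.X : PowerSeries (FractionRing (WittVector p k))) ∈ pianoTilde p k e ∧
    (∀ f ∈ pianoTilde p k e, ∀ g ∈ pianoTilde p k e, f + g ∈ pianoTilde p k e) ∧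
    (∀ f ∈ pianoTilde p k e, -f ∈ pianoTilde p k e) ∧
    (∀ f ∈ pianoTilde p k e, ∀ g ∈ pianoTilde p k e, f * g ∈ pianoTilde p k e) := by
  have hInW : ∀ x : FractionRing (WittVector p k),
      x ∈ (algebraMap (WittVector p k) (FractionRing (WittVector p k))).range → InW p k x := by
    rintro x ⟨w, hw⟩; exact ⟨w, hw⟩
  refine ⟨?_, ?_, ?_, ?_, ?_, ?_⟩
  · intro g n
    refine ⟨PowerSeries.coeff n g * (Nat.factorial (n / e) : WittVector p k), ?_⟩
    simp [PowerSeries.coeff_map, map_mul, map_natCast]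
  · intro n
    refine ⟨if n = 0 then 1 else 0, ?_⟩
    by_cases h : n = 0 <;> simp [h, PowerSeries.coeff_one]
  · intro n
    have h1 : ∀ m : ℕ, m ≤ 1 → Nat.factorial m = 1 := by
      intro m hm; interval_cases m <;> rfl
    refine ⟨if n = 1 then 1 else 0, ?_⟩
    by_cases h : n = 1 <;>
      simp [h, PowerSeries.coeff_X, h1 _ (Nat.div_le_self 1 e)]
  · intro f hf g hg n
    obtain ⟨a, ha⟩ := hf n
    obtain ⟨b, hb⟩ := hg n
    refine ⟨a + b, ?_⟩
    rw [map_add, ha, hb, map_add, add_mul]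
  · intro f hf n
    obtain ⟨a, ha⟩ := hf n
    refine ⟨-a, ?_⟩
    rw [map_neg, ha, map_neg, neg_mul]
  · intro f hf g hg n
    apply hInW
    rw [PowerSeries.coeff_mul, Finset.sum_mul]
    apply Subring.sum_mem
    rintro ⟨i, j⟩ hij
    have hij' : i + j = n := Finset.HasAntidiagonal.mem_antidiagonal.mp hij
    have hd : Nat.factorial (i / e) * Nat.factorial (j / e) ∣ Nat.factorial (n / e) := by
      refine (Nat.factorial_mul_factorial_dvd_factorial_add _ _).trans
        (Nat.factorial_dvd_factorial ?_)
      calc i / e + j / e ≤ (i + j) / e := Nat.add_div_le_add_div i j e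
        _ = n / e := by rw [hij']
    obtain ⟨m, hm⟩ := hd
    obtain ⟨a, ha⟩ := hf i
    obtain ⟨b, hb⟩ := hg j
    have key : PowerSeries.coeff i f * PowerSeries.coeff j g *
        (Nat.factorial (n / e) : FractionRing (WittVector p k)) =
        (PowerSeries.coeff i f * (Nat.factorial (i / e) : FractionRing (WittVector p k))) *
        (PowerSeries.coeff j g * (Nat.factorial (j / e) : FractionRing (WittVector p k))) *
        (m : FractionRing (WittVector p k)) := by
      rw [hm]; push_cast; ring
    rw [key, ← ha, ← hb]
    exact Subring.mul_mem _ (Subring.mul_mem _ ⟨a, rfl⟩ ⟨b, rfl⟩) ⟨(m : WittVector p k), map_natCast _ m⟩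
end
end

section
/- For every integer e ≥ 1, the σ-semilinear substitution F (determined by T ↦ T^p) is a ring endomorphism of B(k)[[T]] that maps R̃e(k) into R̃e(k) and Re(k) into Re(k); moreover its restriction Φ to either piano ring is a Frobenius lift: Φ(f) − f^p ∈ p·R̃e(k) for every f ∈ R̃e(k), and Φ(f) − f^p ∈ p·Re(k) for every f ∈ Re(k). -/
/-!
Piano rings (A. Vasiu, "Shimura varieties and the Mumford–Tate conjecture", §2.1).

`W(k)` is the ring of `p`-typical Witt vectors of a perfect field `k` of characteristic `p`,
`B(k) = W(k)[1/p]` its fraction field.  For `e ≥ 1`, the piano ring `R̃e(k)` of resonance `e`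
consists of the power series `Σ aₙ Tⁿ ∈ B(k)[[T]]` with `aₙ ⬝ (⌊n/e⌋)! ∈ W(k)` for all `n`,
and the piano ring `Re(k)` of convergent resonance `e` consists of those for which moreover
`bₙ := aₙ ⬝ (⌊n/e⌋)!` converges `p`-adically to `0`.
-/

noncomputable section

open PowerSeries

variable (p : ℕ) [Fact p.Prime] (k : Type*) [Field k] [CharP k p] [PerfectRing k p]

/-- The Frobenius automorphism `σ` of `W(k)` extended to `B(k)`. -/
def sigmaB : FractionRing (WittVector p k) ≃+* FractionRing (WittVector p k) :=
  IsFractionRing.ringEquivOfRingEquiv (WittVector.frobeniusEquiv p k)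

/-- The `σ`-semilinear substitution `F : Σ aₙ Tⁿ ↦ Σ σ(aₙ) T^{pn}` on `B(k)[[T]]`. -/
def Fmap (f : PowerSeries (FractionRing (WittVector p k))) :
    PowerSeries (FractionRing (WittVector p k)) :=
  PowerSeries.mk fun n => if p ∣ n then sigmaB p k (PowerSeries.coeff (n / p) f) else 0


set_option linter.unusedSectionVars false
set_option linter.unusedVariables false
set_option maxHeartbeats 1000000
set_option synthInstance.maxHeartbeats 400000




variable {p k}

local notation "W" => WittVector p k
local notation "B" => FractionRing (WittVector p k)
local notation "ι" => algebraMap (WittVector p k) (FractionRing (WittVector p k))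

lemma InW_map (w : W) : InW p k (ι w) := ⟨w, rfl⟩

lemma InW_zero : InW p k 0 := ⟨0, map_zero _⟩

lemma InW_add {x y : B} (hx : InW p k x) (hy : InW p k y) : InW p k (x + y) := by
  obtain ⟨w, rfl⟩ := hx; obtain ⟨v, rfl⟩ := hy; exact ⟨w + v, map_add _ _ _⟩

lemma InW_mul {x y : B} (hx : InW p k x) (hy : InW p k y) : InW p k (x * y) := by
  obtain ⟨w, rfl⟩ := hx; obtain ⟨v, rfl⟩ := hy; exact ⟨w * v, map_mul _ _ _⟩

lemma InW_neg {x : B} (hx : InW p k x) : InW p k (-x) := by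
  obtain ⟨w, rfl⟩ := hx; exact ⟨-w, map_neg _ _⟩

lemma InW_natCast (n : ℕ) : InW p k (n : B) := ⟨n, map_natCast _ n⟩

lemma InW_sum {α : Type*} {s : Finset α} {F : α → B} (h : ∀ x ∈ s, InW p k (F x)) :
    InW p k (∑ x ∈ s, F x) := by
  classical
  induction s using Finset.induction with
  | empty => simpa using InW_zero
  | insert _ _ hx ih =>
      rw [Finset.sum_insert hx]
      exact InW_add (h _ (Finset.mem_insert_self _ _))
        (ih fun y hy => h y (Finset.mem_insert_of_mem hy))

lemma sigmaB_map (w : W) : sigmaB p k (ι w) = ι (WittVector.frobeniusEquiv p k w) := by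
  simp [sigmaB]

lemma InW_sigma {x : B} (hx : InW p k x) : InW p k (sigmaB p k x) := by
  obtain ⟨w, rfl⟩ := hx; exact ⟨_, (sigmaB_map w).symm⟩

/-- sums with `p^m` prefactor -/
lemma InW_pow_sum {α : Type*} (m : ℕ) {s : Finset α} {F : α → B}
    (h : ∀ x ∈ s, ∃ w : W, ι ((p : W) ^ m * w) = F x) :
    ∃ w : W, ι ((p : W) ^ m * w) = ∑ x ∈ s, F x := by
  classical
  induction s using Finset.induction with
  | empty => exact ⟨0, by simp⟩
  | insert _ _ hx ih =>
      obtain ⟨w₁, hw₁⟩ := h _ (Finset.mem_insert_self _ _)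
      obtain ⟨w₂, hw₂⟩ := ih fun y hy => h y (Finset.mem_insert_of_mem hy)
      exact ⟨w₁ + w₂, by rw [Finset.sum_insert hx, ← hw₁, ← hw₂, mul_add, map_add]⟩

/-- Frobenius congruence for Witt vectors. -/
lemma frobenius_congr (b : W) :
    ∃ u : W, WittVector.frobeniusEquiv p k b = b ^ p + p * u := by
  set y : W := WittVector.frobeniusEquiv p k b - b ^ p with hy
  have h0 : y.coeff 0 = 0 := by
    have h1 : y.coeff 0 = WittVector.constantCoeff y := rfl
    rw [h1, hy, map_sub, map_pow]
    have h2 : (WittVector.constantCoeff (WittVector.frobeniusEquiv p k b) : k)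
        = b.coeff 0 ^ p := by
      show (WittVector.frobeniusEquiv p k b).coeff 0 = _
      rw [WittVector.frobeniusEquiv_apply, WittVector.coeff_frobenius_charP]
    rw [h2]
    show b.coeff 0 ^ p - (b.coeff 0) ^ p = 0
    ring
  set z : W := WittVector.mk p fun n => y.coeff (n + 1) with hz
  have hvz : WittVector.verschiebung z = y := by
    ext n
    cases n with
    | zero => rw [WittVector.verschiebung_coeff_zero, h0]
    | succ n => rw [WittVector.verschiebung_coeff_succ, hz, WittVector.coeff_mk]
  set u : W := (WittVector.frobeniusEquiv p k).symm z with hu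
  have hfu : WittVector.frobenius u = z := by
    have := (WittVector.frobeniusEquiv p k).apply_symm_apply z
    rwa [WittVector.frobeniusEquiv_apply] at this
  refine ⟨u, ?_⟩
  have h3 : y = u * p := by rw [← hvz, ← hfu, WittVector.verschiebung_frobenius]
  have h4 : WittVector.frobeniusEquiv p k b - b ^ p = u * p := h3
  rw [eq_comm, eq_comm (b := (WittVector.frobeniusEquiv p k) b), ← sub_eq_iff_eq_add', h4]
  ring

/-! ### arithmetic lemmas -/

lemma div_add_div_le (e i j : ℕ) (he : 1 ≤ e) : i / e + j / e ≤ (i + j) / e := by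
  rw [Nat.le_div_iff_mul_le he]
  calc (i / e + j / e) * e = i / e * e + j / e * e := add_mul _ _ _
    _ ≤ i + j := add_le_add (Nat.div_mul_le_self _ _) (Nat.div_mul_le_self _ _)

lemma fact_div_add_dvd (e i j : ℕ) (he : 1 ≤ e) :
    (i / e).factorial * (j / e).factorial ∣ ((i + j) / e).factorial :=
  (Nat.factorial_mul_factorial_dvd_factorial_add _ _).trans
    (Nat.factorial_dvd_factorial (div_add_div_le e i j he))

lemma fact_pow_dvd (t : ℕ) : ∀ c : ℕ, (t.factorial) ^ c ∣ (c * t).factorial := by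
  intro c
  induction c with
  | zero => simp
  | succ c ih =>
      rw [pow_succ, add_mul, one_mul]
      exact (mul_dvd_mul ih dvd_rfl).trans (Nat.factorial_mul_factorial_dvd_factorial_add _ _)

lemma digits_sum_pos {p t : ℕ} (hp : 2 ≤ p) (ht : 1 ≤ t) : 1 ≤ (p.digits t).sum := by
  have hne : p.digits t ≠ [] := Nat.digits_ne_nil_iff_ne_zero.mpr (by omega)
  have h1 : (p.digits t).getLast hne ≠ 0 := Nat.getLast_digit_ne_zero p (by omega)
  have h2 : (p.digits t).getLast hne ∈ p.digits t := List.getLast_mem hne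
  have := List.single_le_sum (l := p.digits t) (fun x _ => Nat.zero_le x) _ h2
  omega

lemma p_mul_fact_pow_dvd {p : ℕ} [hp : Fact p.Prime] {t : ℕ} (ht : 1 ≤ t) :
    p * t.factorial ^ p ∣ (p * t).factorial := by
  have hd : t.factorial ^ p ∣ (p * t).factorial := fact_pow_dvd t p
  obtain ⟨m, hm⟩ := hd
  have hm0 : m ≠ 0 := by
    rintro rfl
    exact (Nat.factorial_ne_zero (p * t)) (by simpa using hm)
  have hval : padicValNat p ((p * t).factorial) = padicValNat p t.factorial + t :=
    padicValNat_factorial_mul t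
  have hval2 : padicValNat p ((p * t).factorial)
      = p * padicValNat p t.factorial + padicValNat p m := by
    rw [hm, padicValNat.mul (pow_ne_zero _ (Nat.factorial_ne_zero t)) hm0,
      padicValNat.pow _ _]
  have hlegendre : (p - 1) * padicValNat p t.factorial = t - (p.digits t).sum :=
    sub_one_mul_padicValNat_factorial t
  rw [Nat.sub_one_mul] at hlegendre
  have hsum : 1 ≤ (p.digits t).sum := digits_sum_pos hp.out.two_le ht
  have hpm : p ∣ m := by
    by_contra hnd
    have h0 : padicValNat p m = 0 := padicValNat.eq_zero_of_not_dvd hnd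
    have hple : 2 ≤ p := hp.out.two_le
    omega
  obtain ⟨m', rfl⟩ := hpm
  exact ⟨m', by rw [hm]; ring⟩

/-! ### Fmap -/


lemma coeff_Fmap (f : PowerSeries B) (n : ℕ) :
    PowerSeries.coeff n (Fmap p k f)
      = if p ∣ n then sigmaB p k (PowerSeries.coeff (n / p) f) else 0 :=
  coeff_mk _ _

lemma Fmap_zero : Fmap p k 0 = 0 := by
  ext n; rw [coeff_Fmap]; simp

lemma Fmap_add (f g : PowerSeries B) : Fmap p k (f + g) = Fmap p k f + Fmap p k g := by
  ext n; rw [map_add, coeff_Fmap, coeff_Fmap, coeff_Fmap]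
  by_cases h : p ∣ n
  · rw [if_pos h, if_pos h, if_pos h, map_add, map_add]
  · rw [if_neg h, if_neg h, if_neg h, add_zero]

lemma Fmap_one : Fmap p k 1 = 1 := by
  have hp0 : 0 < p := (Fact.out : p.Prime).pos
  ext n; rw [coeff_Fmap]
  by_cases h0 : n = 0
  · subst h0; simp
  · by_cases hd : p ∣ n
    · have hnp : n / p ≠ 0 := by
        obtain ⟨m, rfl⟩ := hd
        rw [Nat.mul_div_cancel_left _ hp0]
        rintro rfl; exact h0 (mul_zero p)
      simp [PowerSeries.coeff_one, hnp, h0, hd]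
    · simp [PowerSeries.coeff_one, h0, hd]

lemma Fmap_mul (f g : PowerSeries B) : Fmap p k (f * g) = Fmap p k f * Fmap p k g := by
  classical
  have hp0 : 0 < p := (Fact.out : p.Prime).pos
  have key : ∀ m : ℕ,
      (∑ x ∈ Finset.HasAntidiagonal.antidiagonal (p * m),
        PowerSeries.coeff x.1 (Fmap p k f) * PowerSeries.coeff x.2 (Fmap p k g))
      = sigmaB p k (PowerSeries.coeff m (f * g)) := by
    intro m
    have hinj : ∀ x ∈ Finset.HasAntidiagonal.antidiagonal m, ∀ y ∈ Finset.HasAntidiagonal.antidiagonal m,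
        (fun y : ℕ × ℕ => (p * y.1, p * y.2)) x = (fun y : ℕ × ℕ => (p * y.1, p * y.2)) y
        → x = y := by
      intro x _ y _ hxy
      simp only [Prod.mk.injEq] at hxy
      exact Prod.ext (Nat.eq_of_mul_eq_mul_left hp0 hxy.1)
        (Nat.eq_of_mul_eq_mul_left hp0 hxy.2)
    have hsub : (Finset.HasAntidiagonal.antidiagonal m).image (fun y : ℕ × ℕ => (p * y.1, p * y.2))
        ⊆ Finset.HasAntidiagonal.antidiagonal (p * m) := by
      intro x hx
      obtain ⟨y, hy, rfl⟩ := Finset.mem_image.mp hx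
      rw [Finset.HasAntidiagonal.mem_antidiagonal] at hy ⊢
      rw [← Nat.mul_add, hy]
    have hzero : ∀ x ∈ Finset.HasAntidiagonal.antidiagonal (p * m),
        x ∉ (Finset.HasAntidiagonal.antidiagonal m).image (fun y : ℕ × ℕ => (p * y.1, p * y.2)) →
        PowerSeries.coeff x.1 (Fmap p k f) * PowerSeries.coeff x.2 (Fmap p k g) = 0 := by
      intro x hx hnx
      by_cases h1 : p ∣ x.1
      · exfalso
        apply hnx
        have hsum : x.1 + x.2 = p * m := Finset.HasAntidiagonal.mem_antidiagonal.mp hx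
        have h2 : p ∣ x.2 := (Nat.dvd_add_right h1).mp (hsum ▸ Dvd.intro m rfl)
        obtain ⟨u, hu⟩ := h1
        obtain ⟨v, hv⟩ := h2
        refine Finset.mem_image.mpr ⟨(u, v), ?_, by rw [← hu, ← hv]⟩
        rw [Finset.HasAntidiagonal.mem_antidiagonal]
        have : p * (u + v) = p * m := by rw [Nat.mul_add, ← hu, ← hv, hsum]
        exact Nat.eq_of_mul_eq_mul_left hp0 this
      · rw [coeff_Fmap, if_neg h1, zero_mul]
    calc (∑ x ∈ Finset.HasAntidiagonal.antidiagonal (p * m),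
          PowerSeries.coeff x.1 (Fmap p k f) * PowerSeries.coeff x.2 (Fmap p k g))
        = ∑ x ∈ (Finset.HasAntidiagonal.antidiagonal m).image (fun y : ℕ × ℕ => (p * y.1, p * y.2)),
            PowerSeries.coeff x.1 (Fmap p k f) * PowerSeries.coeff x.2 (Fmap p k g) :=
          (Finset.sum_subset hsub hzero).symm
      _ = ∑ y ∈ Finset.HasAntidiagonal.antidiagonal m,
            PowerSeries.coeff (p * y.1) (Fmap p k f)
              * PowerSeries.coeff (p * y.2) (Fmap p k g) := Finset.sum_image hinj
      _ = ∑ y ∈ Finset.HasAntidiagonal.antidiagonal m,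
            sigmaB p k (PowerSeries.coeff y.1 f) * sigmaB p k (PowerSeries.coeff y.2 g) := by
          refine Finset.sum_congr rfl fun y _ => ?_
          rw [coeff_Fmap, coeff_Fmap, if_pos ⟨y.1, rfl⟩, if_pos ⟨y.2, rfl⟩,
            Nat.mul_div_cancel_left _ hp0, Nat.mul_div_cancel_left _ hp0]
      _ = sigmaB p k (PowerSeries.coeff m (f * g)) := by
          rw [PowerSeries.coeff_mul, map_sum]
          exact Finset.sum_congr rfl fun y _ => (map_mul _ _ _).symm
  ext n
  by_cases hn : p ∣ n
  · obtain ⟨m, rfl⟩ := hn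
    rw [coeff_Fmap, if_pos ⟨m, rfl⟩, Nat.mul_div_cancel_left _ hp0, ← key m,
      ← PowerSeries.coeff_mul]
  · rw [coeff_Fmap, if_neg hn, PowerSeries.coeff_mul]
    symm
    apply Finset.sum_eq_zero
    intro x hx
    by_cases h1 : p ∣ x.1
    · have hsum : x.1 + x.2 = n := Finset.HasAntidiagonal.mem_antidiagonal.mp hx
      have h2 : ¬ p ∣ x.2 := fun h2 => hn (hsum ▸ dvd_add h1 h2)
      rw [coeff_Fmap (f := g), if_neg h2, mul_zero]
    · rw [coeff_Fmap, if_neg h1, zero_mul]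

lemma CXpow_pow (a : B) (j c : ℕ) :
    (PowerSeries.C (R := B) a * PowerSeries.X ^ j) ^ c
      = PowerSeries.C (R := B) (a ^ c) * PowerSeries.X ^ (j * c) := by
  rw [mul_pow, ← map_pow, ← pow_mul]

lemma Fmap_CXpow (a : B) (j : ℕ) :
    Fmap p k (PowerSeries.C (R := B) a * PowerSeries.X ^ j)
      = PowerSeries.C (R := B) (sigmaB p k a) * PowerSeries.X ^ (p * j) := by
  have hp0 : 0 < p := (Fact.out : p.Prime).pos
  ext i
  rw [coeff_Fmap]
  by_cases hi : i = p * j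
  · subst hi
    rw [if_pos ⟨j, rfl⟩, Nat.mul_div_cancel_left _ hp0, PowerSeries.coeff_C_mul_X_pow,
      PowerSeries.coeff_C_mul_X_pow, if_pos rfl, if_pos rfl]
  · by_cases hd : p ∣ i
    · obtain ⟨u, rfl⟩ := hd
      have hu : u ≠ j := fun h => hi (by rw [h])
      rw [if_pos ⟨u, rfl⟩, Nat.mul_div_cancel_left _ hp0, PowerSeries.coeff_C_mul_X_pow,
        PowerSeries.coeff_C_mul_X_pow, if_neg hu, if_neg hi, map_zero]
    · rw [if_neg hd, PowerSeries.coeff_C_mul_X_pow, if_neg hi]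

/-! ### piano rings -/



variable {e : ℕ}

lemma pt_zero : (0 : PowerSeries B) ∈ pianoTilde p k e := by
  intro n; simpa using InW_zero

lemma pt_one : (1 : PowerSeries B) ∈ pianoTilde p k e := by
  intro n
  by_cases h0 : n = 0
  · subst h0; simpa using InW_natCast (p := p) (k := k) 1
  · simp only [PowerSeries.coeff_one, if_neg h0, zero_mul]; exact InW_zero

lemma pt_add {f g : PowerSeries B} (hf : f ∈ pianoTilde p k e) (hg : g ∈ pianoTilde p k e) :
    f + g ∈ pianoTilde p k e := by
  intro n; rw [map_add, add_mul]; exact InW_add (hf n) (hg n)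

lemma pt_neg {f : PowerSeries B} (hf : f ∈ pianoTilde p k e) : -f ∈ pianoTilde p k e := by
  intro n; rw [map_neg, neg_mul]; exact InW_neg (hf n)

lemma pt_sub {f g : PowerSeries B} (hf : f ∈ pianoTilde p k e) (hg : g ∈ pianoTilde p k e) :
    f - g ∈ pianoTilde p k e := by
  rw [sub_eq_add_neg]; exact pt_add hf (pt_neg hg)

lemma pt_natCast (c : ℕ) : (c : PowerSeries B) ∈ pianoTilde p k e := by
  intro n
  rw [← map_natCast (PowerSeries.C (R := B)) c, PowerSeries.coeff_C]
  by_cases h0 : n = 0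
  · rw [if_pos h0]; exact InW_mul (InW_natCast c) (InW_natCast _)
  · rw [if_neg h0, zero_mul]; exact InW_zero

lemma pt_mul {f g : PowerSeries B} (he : 1 ≤ e) (hf : f ∈ pianoTilde p k e) (hg : g ∈ pianoTilde p k e) :
    f * g ∈ pianoTilde p k e := by
  intro n
  rw [PowerSeries.coeff_mul, Finset.sum_mul]
  apply InW_sum
  intro x hx
  have hxn : x.1 + x.2 = n := Finset.HasAntidiagonal.mem_antidiagonal.mp hx
  obtain ⟨r, hr⟩ := fact_div_add_dvd e x.1 x.2 he
  have hcast : ((n / e).factorial : B)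
      = ((x.1 / e).factorial : B) * ((x.2 / e).factorial : B) * (r : B) := by
    rw [← hxn, hr]; push_cast; ring
  have h2 : PowerSeries.coeff x.1 f * PowerSeries.coeff x.2 g * ((n / e).factorial : B)
      = (PowerSeries.coeff x.1 f * ((x.1 / e).factorial : B))
        * (PowerSeries.coeff x.2 g * ((x.2 / e).factorial : B)) * (r : B) := by
    rw [hcast]; ring
  rw [h2]
  exact InW_mul (InW_mul (hf x.1) (hg x.2)) (InW_natCast r)

lemma pt_pow {f : PowerSeries B} (he : 1 ≤ e) (hf : f ∈ pianoTilde p k e) (c : ℕ) :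
    f ^ c ∈ pianoTilde p k e := by
  induction c with
  | zero => rw [pow_zero]; exact pt_one
  | succ c ih => rw [pow_succ]; exact pt_mul he ih hf

lemma pt_sum {α : Type*} {s : Finset α} {F : α → PowerSeries B}
    (h : ∀ x ∈ s, F x ∈ pianoTilde p k e) : (∑ x ∈ s, F x) ∈ pianoTilde p k e := by
  classical
  induction s using Finset.induction with
  | empty => simpa using pt_zero
  | insert _ _ hx ih =>
      rw [Finset.sum_insert hx]
      exact pt_add (h _ (Finset.mem_insert_self _ _))
        (ih fun y hy => h y (Finset.mem_insert_of_mem hy))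

lemma pt_CXpow {a : B} {j : ℕ} (ha : InW p k (a * ((j / e).factorial : B))) :
    PowerSeries.C (R := B) a * PowerSeries.X ^ j ∈ pianoTilde p k e := by
  intro n
  rw [PowerSeries.coeff_C_mul_X_pow]
  by_cases h : n = j
  · subst h; rw [if_pos rfl]; exact ha
  · rw [if_neg h, zero_mul]; exact InW_zero

lemma pt_Fmap {f : PowerSeries B} (hf : f ∈ pianoTilde p k e) : Fmap p k f ∈ pianoTilde p k e := by
  have hp0 : 0 < p := (Fact.out : p.Prime).pos
  intro n
  rw [coeff_Fmap]
  by_cases hd : p ∣ n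
  · obtain ⟨m, rfl⟩ := hd
    rw [if_pos ⟨m, rfl⟩, Nat.mul_div_cancel_left _ hp0]
    obtain ⟨r, hr⟩ : (m / e).factorial ∣ ((p * m) / e).factorial :=
      Nat.factorial_dvd_factorial
        (Nat.div_le_div_right (Nat.le_mul_of_pos_left m hp0))
    have hcast : (((p * m) / e).factorial : B) = ((m / e).factorial : B) * (r : B) := by
      rw [hr]; push_cast; ring
    have h2 : sigmaB p k (PowerSeries.coeff m f) * (((p * m) / e).factorial : B)
        = sigmaB p k (PowerSeries.coeff m f * ((m / e).factorial : B)) * (r : B) := by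
      rw [map_mul, map_natCast, hcast]; ring
    rw [h2]
    exact InW_mul (InW_sigma (hf m)) (InW_natCast r)
  · rw [if_neg hd, zero_mul]; exact InW_zero

/-! ### pianoR closure -/

lemma pr_tilde {f : PowerSeries B} (hf : f ∈ pianoR p k e) : f ∈ pianoTilde p k e := hf.1

lemma pr_one : (1 : PowerSeries B) ∈ pianoR p k e := by
  refine ⟨pt_one, fun m => ⟨1, fun n hn => ⟨0, ?_⟩⟩⟩
  have hn0 : n ≠ 0 := by omega
  simp [PowerSeries.coeff_one, hn0]

lemma pr_mul {f g : PowerSeries B} (he : 1 ≤ e) (hf : f ∈ pianoR p k e) (hg : g ∈ pianoR p k e) :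
    f * g ∈ pianoR p k e := by
  refine ⟨pt_mul he hf.1 hg.1, fun m => ?_⟩
  obtain ⟨N₁, hN₁⟩ := hf.2 m
  obtain ⟨N₂, hN₂⟩ := hg.2 m
  refine ⟨N₁ + N₂, fun n hn => ?_⟩
  rw [PowerSeries.coeff_mul, Finset.sum_mul]
  apply InW_pow_sum
  intro x hx
  have hxn : x.1 + x.2 = n := Finset.HasAntidiagonal.mem_antidiagonal.mp hx
  obtain ⟨r, hr⟩ := fact_div_add_dvd e x.1 x.2 he
  have hcast : ((n / e).factorial : B)
      = ((x.1 / e).factorial : B) * ((x.2 / e).factorial : B) * (r : B) := by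
    rw [← hxn, hr]; push_cast; ring
  by_cases h1 : N₁ ≤ x.1
  · obtain ⟨w₁, hw₁⟩ := hN₁ x.1 h1
    obtain ⟨v, hv⟩ := hg.1 x.2
    refine ⟨w₁ * (v * (r : WittVector p k)), ?_⟩
    rw [show (p : WittVector p k) ^ m * (w₁ * (v * (r : WittVector p k)))
        = ((p : WittVector p k) ^ m * w₁) * v * (r : WittVector p k) by ring,
      map_mul, map_mul, map_natCast, hw₁, hv, hcast]
    ring
  · have h2 : N₂ ≤ x.2 := by omega
    obtain ⟨w₂, hw₂⟩ := hN₂ x.2 h2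
    obtain ⟨v, hv⟩ := hf.1 x.1
    refine ⟨v * (w₂ * (r : WittVector p k)), ?_⟩
    rw [show (p : WittVector p k) ^ m * (v * (w₂ * (r : WittVector p k)))
        = v * ((p : WittVector p k) ^ m * w₂) * (r : WittVector p k) by ring,
      map_mul, map_mul, map_natCast, hw₂, hv, hcast]
    ring

lemma pr_pow {f : PowerSeries B} (he : 1 ≤ e) (hf : f ∈ pianoR p k e) (c : ℕ) : f ^ c ∈ pianoR p k e := by
  induction c with
  | zero => rw [pow_zero]; exact pr_one
  | succ c ih => rw [pow_succ]; exact pr_mul he ih hf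

lemma pr_Fmap {f : PowerSeries B} (hf : f ∈ pianoR p k e) : Fmap p k f ∈ pianoR p k e := by
  have hp0 : 0 < p := (Fact.out : p.Prime).pos
  refine ⟨pt_Fmap hf.1, fun m => ?_⟩
  obtain ⟨N, hN⟩ := hf.2 m
  refine ⟨p * N, fun n hn => ?_⟩
  rw [coeff_Fmap]
  by_cases hd : p ∣ n
  · obtain ⟨u, rfl⟩ := hd
    rw [if_pos ⟨u, rfl⟩, Nat.mul_div_cancel_left _ hp0]
    have hu : N ≤ u := Nat.le_of_mul_le_mul_left hn hp0
    obtain ⟨w₀, hw₀⟩ := hN u hu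
    obtain ⟨r, hr⟩ : (u / e).factorial ∣ ((p * u) / e).factorial :=
      Nat.factorial_dvd_factorial
        (Nat.div_le_div_right (Nat.le_mul_of_pos_left u hp0))
    have hcast : (((p * u) / e).factorial : B) = ((u / e).factorial : B) * (r : B) := by
      rw [hr]; push_cast; ring
    have h1 : sigmaB p k (PowerSeries.coeff u f * ((u / e).factorial : B))
        = ι ((p : WittVector p k) ^ m * (WittVector.frobeniusEquiv p k w₀)) := by
      rw [← hw₀, sigmaB_map, map_mul, map_pow, map_natCast]
    refine ⟨WittVector.frobeniusEquiv p k w₀ * (r : WittVector p k), ?_⟩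
    rw [show (p : WittVector p k) ^ m
          * (WittVector.frobeniusEquiv p k w₀ * (r : WittVector p k))
        = ((p : WittVector p k) ^ m * WittVector.frobeniusEquiv p k w₀)
          * (r : WittVector p k) by ring,
      map_mul, map_natCast, ← h1, map_mul, map_natCast, hcast]
    ring
  · rw [if_neg hd, zero_mul]
    exact ⟨0, by simp⟩

/-! ### Frobenius lift -/

lemma pB_ne_zero : (p : B) ≠ 0 := by
  have h1 : (p : B) = ι ((p : ℕ) : WittVector p k) := (map_natCast _ p).symm
  rw [h1]
  intro h
  have h2 : ((p : ℕ) : WittVector p k) = 0 :=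
    IsFractionRing.injective (WittVector p k) B (by rw [h, map_zero])
  exact WittVector.p_nonzero p k h2

lemma key_coeff (he : 1 ≤ e) (a : B) (j : ℕ)
    (ha : InW p k (a * ((j / e).factorial : B))) :
    ∃ w : WittVector p k, ι ((p : WittVector p k) * w)
      = (sigmaB p k a - a ^ p) * ((((p * j) / e).factorial : B)) := by
  have hp' : p.Prime := Fact.out
  have hp0 : 0 < p := hp'.pos
  set t := j / e with ht
  set s := (p * j) / e with hs
  have hts : p * t ≤ s := by
    rw [hs, Nat.le_div_iff_mul_le (by omega : 0 < e)]
    calc p * t * e = p * (j / e * e) := by rw [ht]; ring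
      _ ≤ p * j := Nat.mul_le_mul_left p (Nat.div_mul_le_self j e)
  obtain ⟨b, hb⟩ := ha
  by_cases ht0 : t = 0
  · obtain ⟨u, hu⟩ := frobenius_congr b
    refine ⟨u * (s.factorial : WittVector p k), ?_⟩
    have hfac1 : ((t.factorial : ℕ) : B) = 1 := by rw [ht0, Nat.factorial_zero, Nat.cast_one]
    have hba : ι b = a := by rw [hb, hfac1, mul_one]
    have hσ : sigmaB p k a = a ^ p + (p : B) * ι u := by
      rw [← hba, sigmaB_map, hu, map_add, map_mul, map_pow, map_natCast]
    rw [hσ, map_mul, map_mul, map_natCast, map_natCast]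
    ring
  · obtain ⟨c, hc⟩ : p * t.factorial ^ p ∣ s.factorial :=
      (p_mul_fact_pow_dvd (Nat.one_le_iff_ne_zero.mpr ht0)).trans (Nat.factorial_dvd_factorial hts)
    have h1 : sigmaB p k a * ((t.factorial : ℕ) : B)
        = ι (WittVector.frobeniusEquiv p k b) := by
      have h0 := sigmaB_map (p := p) (k := k) b
      rw [hb, map_mul, map_natCast] at h0
      exact h0
    refine ⟨(c : WittVector p k) * (WittVector.frobeniusEquiv p k b
      * ((t.factorial : ℕ) : WittVector p k) ^ (p - 1) - b ^ p), ?_⟩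
    have hd1 : ((t.factorial : ℕ) : B) ^ (p - 1) * ((t.factorial : ℕ) : B)
        = ((t.factorial : ℕ) : B) ^ p := by
      rw [← pow_succ, Nat.sub_add_cancel hp'.one_le]
    have hcast : ((s.factorial : ℕ) : B)
        = (p : B) * ((t.factorial : ℕ) : B) ^ p * (c : B) := by
      rw [hc]; push_cast; ring
    simp only [map_mul, map_sub, map_pow, map_natCast]
    rw [← h1, hb, hcast]
    linear_combination ((p : B) * (c : B) * (sigmaB p k a)) * hd1

lemma mono_lift (he : 1 ≤ e) {a : B} {j : ℕ}
    (ha : InW p k (a * ((j / e).factorial : B))) :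
    ∃ g ∈ pianoTilde p k e,
      Fmap p k (PowerSeries.C (R := B) a * PowerSeries.X ^ j)
        - (PowerSeries.C (R := B) a * PowerSeries.X ^ j) ^ p = (p : PowerSeries B) * g := by
  have hpB : (p : B) ≠ 0 := pB_ne_zero
  refine ⟨PowerSeries.C (R := B) ((p : B)⁻¹ * (sigmaB p k a - a ^ p)) * PowerSeries.X ^ (p * j),
    ?_, ?_⟩
  · apply pt_CXpow
    obtain ⟨w, hw⟩ := key_coeff he a j ha
    refine ⟨w, ?_⟩
    have h2 : (p : B) * ι w = (sigmaB p k a - a ^ p) * ((((p * j) / e).factorial : ℕ) : B) := by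
      rw [← hw, map_mul, map_natCast]
    rw [mul_assoc, ← h2, inv_mul_cancel_left₀ hpB]
  · rw [Fmap_CXpow, CXpow_pow, mul_comm j p, ← sub_mul, ← map_sub]
    rw [show (p : PowerSeries B) = PowerSeries.C (R := B) ((p : ℕ) : B) from (map_natCast _ p).symm,
      ← mul_assoc, ← map_mul,
      show (p : B) * ((p : B)⁻¹ * (sigmaB p k a - a ^ p)) = sigmaB p k a - a ^ p from
        mul_inv_cancel_left₀ hpB _]

lemma sum_lift (he : 1 ≤ e) {α : Type*} (s : Finset α) (a : α → B) (j : α → ℕ)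
    (ha : ∀ x ∈ s, InW p k (a x * (((j x) / e).factorial : B))) :
    ∃ g ∈ pianoTilde p k e,
      Fmap p k (∑ x ∈ s, PowerSeries.C (R := B) (a x) * PowerSeries.X ^ (j x))
        - (∑ x ∈ s, PowerSeries.C (R := B) (a x) * PowerSeries.X ^ (j x)) ^ p
        = (p : PowerSeries B) * g := by
  classical
  have hp' : p.Prime := Fact.out
  induction s using Finset.induction with
  | empty =>
      refine ⟨0, pt_zero, ?_⟩
      simp [Fmap_zero, zero_pow hp'.ne_zero]
  | insert x s hx ih =>
      obtain ⟨g₁, hg₁, hge₁⟩ := mono_lift he (ha x (Finset.mem_insert_self _ _))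
      obtain ⟨g₂, hg₂, hge₂⟩ := ih fun y hy => ha y (Finset.mem_insert_of_mem hy)
      set u := PowerSeries.C (R := B) (a x) * PowerSeries.X ^ (j x) with hu
      set v := ∑ y ∈ s, PowerSeries.C (R := B) (a y) * PowerSeries.X ^ (j y) with hv
      have hadd : (u + v) ^ p = u ^ p + v ^ p
          + (p : PowerSeries B) * ∑ i ∈ Finset.Ioo 0 p,
              u ^ i * v ^ (p - i) * ((p.choose i / p : ℕ) : PowerSeries B) :=
        add_pow_prime_eq' hp' u v
      have hum : u ∈ pianoTilde p k e := pt_CXpow (ha x (Finset.mem_insert_self _ _))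
      have hvm : v ∈ pianoTilde p k e :=
        pt_sum fun y hy => pt_CXpow (ha y (Finset.mem_insert_of_mem hy))
      refine ⟨g₁ + g₂ - ∑ i ∈ Finset.Ioo 0 p,
          u ^ i * v ^ (p - i) * ((p.choose i / p : ℕ) : PowerSeries B), ?_, ?_⟩
      · apply pt_sub (pt_add hg₁ hg₂)
        exact pt_sum fun i _ => pt_mul he (pt_mul he (pt_pow he hum i)
          (pt_pow he hvm (p - i))) (pt_natCast _)
      · rw [Finset.sum_insert hx, Fmap_add, hadd]
        rw [mul_sub, mul_add, ← hge₁, ← hge₂]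
        ring

lemma lift_coeff (he : 1 ≤ e) {f : PowerSeries B} (hf : f ∈ pianoTilde p k e) (n : ℕ) :
    ∃ w : WittVector p k, ι ((p : WittVector p k) * w)
      = PowerSeries.coeff n (Fmap p k f - f ^ p) * ((n / e).factorial : B) := by
  classical
  set P : PowerSeries B :=
    ∑ j ∈ Finset.range (n + 1), PowerSeries.C (R := B) (PowerSeries.coeff j f) * PowerSeries.X ^ j
    with hP
  have hPc : ∀ i, PowerSeries.coeff i P
      = if i ≤ n then PowerSeries.coeff i f else 0 := by
    intro i
    rw [hP, map_sum,
      Finset.sum_congr rfl fun j _ => PowerSeries.coeff_C_mul_X_pow _ _ _,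
      Finset.sum_ite_eq (Finset.range (n + 1)) i (fun j => PowerSeries.coeff j f)]
    simp [Nat.lt_succ_iff]
  have h1 : PowerSeries.coeff n (Fmap p k f) = PowerSeries.coeff n (Fmap p k P) := by
    rw [coeff_Fmap, coeff_Fmap]
    by_cases hd : p ∣ n
    · rw [if_pos hd, if_pos hd, hPc, if_pos (Nat.div_le_self n p)]
    · rw [if_neg hd, if_neg hd]
  have h2 : PowerSeries.coeff n (f ^ p) = PowerSeries.coeff n (P ^ p) := by
    obtain ⟨q, hq⟩ := sub_dvd_pow_sub_pow f P p
    have h3 : PowerSeries.coeff n (f ^ p - P ^ p) = 0 := by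
      rw [hq, PowerSeries.coeff_mul]
      apply Finset.sum_eq_zero
      intro x hx
      have hxn : x.1 + x.2 = n := Finset.HasAntidiagonal.mem_antidiagonal.mp hx
      have h4 : PowerSeries.coeff x.1 (f - P) = 0 := by
        rw [map_sub, hPc, if_pos (by omega), sub_self]
      rw [h4, zero_mul]
    rw [map_sub] at h3
    exact (sub_eq_zero.mp h3).symm ▸ rfl
  obtain ⟨g, hg, hge⟩ := sum_lift he (Finset.range (n + 1))
    (fun j => PowerSeries.coeff j f) (fun j => j) (fun j _ => hf j)
  have h5 : PowerSeries.coeff n (Fmap p k f - f ^ p) = (p : B) * PowerSeries.coeff n g := by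
    rw [map_sub, h1, h2, ← map_sub, hge,
      show ((p : PowerSeries B)) = PowerSeries.C (R := B) ((p : ℕ) : B) from (map_natCast _ p).symm,
      PowerSeries.coeff_C_mul]
  obtain ⟨w, hw⟩ := hg n
  refine ⟨w, ?_⟩
  rw [map_mul, map_natCast, hw, h5, mul_assoc]

lemma lift_g_eq (f : PowerSeries B) :
    Fmap p k f - f ^ p
      = (p : PowerSeries B) * (PowerSeries.C (R := B) ((p : B)⁻¹) * (Fmap p k f - f ^ p)) := by
  rw [show ((p : PowerSeries B)) = PowerSeries.C (R := B) ((p : ℕ) : B) from (map_natCast _ p).symm,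
    ← mul_assoc, ← map_mul, mul_inv_cancel₀ pB_ne_zero, map_one, one_mul]

lemma lift_g_mem (he : 1 ≤ e) {f : PowerSeries B} (hf : f ∈ pianoTilde p k e) :
    PowerSeries.C (R := B) ((p : B)⁻¹) * (Fmap p k f - f ^ p) ∈ pianoTilde p k e := by
  intro n
  obtain ⟨w, hw⟩ := lift_coeff he hf n
  refine ⟨w, ?_⟩
  have h2 : (p : B) * ι w
      = PowerSeries.coeff n (Fmap p k f - f ^ p) * ((n / e).factorial : B) := by
    rw [← hw, map_mul, map_natCast]
  rw [PowerSeries.coeff_C_mul, mul_assoc, ← h2, inv_mul_cancel_left₀ pB_ne_zero]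

lemma lift_g_mem_r (he : 1 ≤ e) {f : PowerSeries B} (hf : f ∈ pianoR p k e) :
    PowerSeries.C (R := B) ((p : B)⁻¹) * (Fmap p k f - f ^ p) ∈ pianoR p k e := by
  refine ⟨lift_g_mem he hf.1, fun m => ?_⟩
  have hF : Fmap p k f ∈ pianoR p k e := pr_Fmap hf
  have hfp : f ^ p ∈ pianoR p k e := pr_pow he hf p
  obtain ⟨N₁, hN₁⟩ := hF.2 (m + 1)
  obtain ⟨N₂, hN₂⟩ := hfp.2 (m + 1)
  refine ⟨max N₁ N₂, fun n hn => ?_⟩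
  obtain ⟨w₁, hw₁⟩ := hN₁ n (le_of_max_le_left hn)
  obtain ⟨w₂, hw₂⟩ := hN₂ n (le_of_max_le_right hn)
  refine ⟨w₁ - w₂, ?_⟩
  have h1 : ι ((p : WittVector p k) ^ (m + 1) * (w₁ - w₂))
      = (PowerSeries.coeff n (Fmap p k f) - PowerSeries.coeff n (f ^ p))
        * ((n / e).factorial : B) := by
    rw [mul_sub, map_sub, hw₁, hw₂, sub_mul]
  have h2 : ι ((p : WittVector p k) ^ (m + 1) * (w₁ - w₂))
      = (p : B) * ι ((p : WittVector p k) ^ m * (w₁ - w₂)) := by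
    rw [show (p : WittVector p k) ^ (m + 1) * (w₁ - w₂)
        = (p : WittVector p k) * ((p : WittVector p k) ^ m * (w₁ - w₂)) by ring,
      map_mul, map_natCast]
  rw [PowerSeries.coeff_C_mul, map_sub, mul_assoc, ← h1, h2, inv_mul_cancel_left₀ pB_ne_zero]


variable (p k)

/-- For every `e ≥ 1`, the `σ`-semilinear substitution `F` (determined by
`T ↦ T^p`) is a ring endomorphism of `B(k)[[T]]` that maps `R̃e(k)` into `R̃e(k)` and `Re(k)`
into `Re(k)`; moreover its restriction `Φ` to either piano ring is a Frobenius lift: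
`Φ(f) − f^p ∈ p·R̃e(k)` for every `f ∈ R̃e(k)`, and `Φ(f) − f^p ∈ p·Re(k)` for every
`f ∈ Re(k)`. -/
theorem Fmap_ringHom_and_frobeniusLift (e : ℕ) (he : 1 ≤ e) :
    -- `F` is a ring endomorphism of `B(k)[[T]]`:
    (Fmap p k (1 : PowerSeries (FractionRing (WittVector p k))) = 1) ∧
    (∀ f g : PowerSeries (FractionRing (WittVector p k)),
      Fmap p k (f + g) = Fmap p k f + Fmap p k g) ∧
    (∀ f g : PowerSeries (FractionRing (WittVector p k)),
      Fmap p k (f * g) = Fmap p k f * Fmap p k g) ∧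
    -- `F` maps `R̃e(k)` into `R̃e(k)` and `Re(k)` into `Re(k)`:
    (∀ f ∈ pianoTilde p k e, Fmap p k f ∈ pianoTilde p k e) ∧
    (∀ f ∈ pianoR p k e, Fmap p k f ∈ pianoR p k e) ∧
    -- the restriction is a Frobenius lift:
    (∀ f ∈ pianoTilde p k e, ∃ g ∈ pianoTilde p k e,
      Fmap p k f - f ^ p = (p : PowerSeries (FractionRing (WittVector p k))) * g) ∧
    (∀ f ∈ pianoR p k e, ∃ g ∈ pianoR p k e,
      Fmap p k f - f ^ p = (p : PowerSeries (FractionRing (WittVector p k))) * g) := by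
  exact ⟨Fmap_one, Fmap_add, Fmap_mul, fun f hf => pt_Fmap hf, fun f hf => pr_Fmap hf,
    fun f hf => ⟨_, lift_g_mem he hf, lift_g_eq f⟩,
    fun f hf => ⟨_, lift_g_mem_r he hf, lift_g_eq f⟩⟩
end
end

section
/- Fix an integer e ≥ 1, and for n ≥ 0 let Jₙ = (Tⁿ) be the ideal of W(k)[[T]] generated by Tⁿ. For every n with 0 ≤ n ≤ ep − 1, the inclusion of rings W(k)[[T]] ⊆ R̃e(k) induces a ring isomorphism W(k)[[T]]/Jₙ ≅ R̃e(k)/Iₙ. -/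
/-!
Piano rings (A. Vasiu, "Shimura varieties and the Mumford–Tate conjecture", §2.1).

`W(k)` is the ring of `p`-typical Witt vectors of a perfect field `k` of characteristic `p`,
`B(k) = W(k)[1/p]` its fraction field.  For `e ≥ 1`, the piano ring `R̃e(k)` of resonance `e`
consists of the power series `Σ aₙ Tⁿ ∈ B(k)[[T]]` with `aₙ ⬝ (⌊n/e⌋)! ∈ W(k)` for all `n`,
and the piano ring `Re(k)` of convergent resonance `e` consists of those for which moreover
`bₙ := aₙ ⬝ (⌊n/e⌋)!` converges `p`-adically to `0`.
-/

noncomputable section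

open PowerSeries

variable (p : ℕ) [Fact p.Prime] (k : Type*) [Field k] [CharP k p] [PerfectRing k p]

/-- `Iₙ`: the power series in `R̃e(k)` whose coefficients `aₘ` vanish for `m < n`. -/
def Iset (e n : ℕ) : Set (PowerSeries (FractionRing (WittVector p k))) :=
  {f ∈ pianoTilde p k e | ∀ m < n, PowerSeries.coeff m f = 0}


section Aux
variable (p : ℕ) [Fact p.Prime] (k : Type*) [Field k] [CharP k p] [PerfectRing k p]

lemma natCast_isUnit_witt (N : ℕ) (h : ¬ p ∣ N) : IsUnit (N : WittVector p k) := by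
  apply WittVector.isUnit_of_coeff_zero_ne_zero
  have : (WittVector.constantCoeff : WittVector p k →+* k) (N : WittVector p k) = (N : k) :=
    map_natCast _ N
  rw [WittVector.constantCoeff_apply] at this
  rw [this]
  exact fun h0 => h ((CharP.cast_eq_zero_iff k p N).mp h0)

lemma inW_sub {x y : FractionRing (WittVector p k)} (hx : InW p k x) (hy : InW p k y) :
    InW p k (x - y) := by
  obtain ⟨a, ha⟩ := hx; obtain ⟨b, hb⟩ := hy
  exact ⟨a - b, by rw [map_sub, ha, hb]⟩

lemma mem_pianoTilde_map (e : ℕ) (g : PowerSeries (WittVector p k)) :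
    PowerSeries.map (algebraMap (WittVector p k) (FractionRing (WittVector p k))) g
      ∈ pianoTilde p k e := by
  intro m
  refine ⟨PowerSeries.coeff m g * (Nat.factorial (m / e) : WittVector p k), ?_⟩
  rw [map_mul, map_natCast, PowerSeries.coeff_map]

end Aux

/-- Fix `e ≥ 1` and for `n ≥ 0` let `Jₙ = (Tⁿ)` be the ideal of `W(k)[[T]]`
generated by `Tⁿ`.  For every `n` with `0 ≤ n ≤ ep − 1`, the inclusion of rings
`W(k)[[T]] ⊆ R̃e(k)` induces a ring isomorphism `W(k)[[T]]/Jₙ ≅ R̃e(k)/Iₙ`:  the inclusion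
maps `W(k)[[T]]` into `R̃e(k)`, the preimage of `Iₙ` is exactly `Jₙ`, and every element of
`R̃e(k)` is congruent modulo `Iₙ` to an element of `W(k)[[T]]`. -/
theorem quotient_iso_of_le (e : ℕ) (he : 1 ≤ e) (n : ℕ) (hn : n ≤ e * p - 1) :
    -- the inclusion `W(k)[[T]] ⊆ R̃e(k)`:
    (∀ g : PowerSeries (WittVector p k),
      PowerSeries.map (algebraMap (WittVector p k) (FractionRing (WittVector p k))) g
        ∈ pianoTilde p k e) ∧
    -- injectivity of the induced map: the preimage of `Iₙ` is `Jₙ = (Tⁿ)`: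
    (∀ g : PowerSeries (WittVector p k),
      PowerSeries.map (algebraMap (WittVector p k) (FractionRing (WittVector p k))) g
          ∈ Iset p k e n
        ↔ g ∈ Ideal.span {(PowerSeries.X : PowerSeries (WittVector p k)) ^ n}) ∧
    -- surjectivity of the induced map:
    (∀ f ∈ pianoTilde p k e, ∃ g : PowerSeries (WittVector p k),
      f - PowerSeries.map (algebraMap (WittVector p k) (FractionRing (WittVector p k))) g
        ∈ Iset p k e n) := by
  have hinj : Function.Injective
      (algebraMap (WittVector p k) (FractionRing (WittVector p k))) :=
    IsFractionRing.injective _ _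
  refine ⟨mem_pianoTilde_map p k e, ?_, ?_⟩
  · intro g
    constructor
    · rintro ⟨-, hg⟩
      rw [Ideal.mem_span_singleton, PowerSeries.X_pow_dvd_iff]
      intro m hm
      apply hinj
      rw [map_zero, ← PowerSeries.coeff_map]
      exact hg m hm
    · intro hg
      rw [Ideal.mem_span_singleton, PowerSeries.X_pow_dvd_iff] at hg
      refine ⟨mem_pianoTilde_map p k e g, fun m hm => ?_⟩
      rw [PowerSeries.coeff_map, hg m hm, map_zero]
  · intro f hf
    have hfactU : ∀ m < n, IsUnit ((Nat.factorial (m / e) : WittVector p k)) := by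
      intro m hm
      apply natCast_isUnit_witt
      intro hdvd
      have hple : p ≤ m / e := (Nat.Prime.dvd_factorial (Fact.out)).mp hdvd
      have : m / e < p := by
        rw [Nat.div_lt_iff_lt_mul (by omega : 0 < e), mul_comm]
        have hp2 : 2 ≤ p := (Fact.out : p.Prime).two_le
        omega
      omega
    set ι := algebraMap (WittVector p k) (FractionRing (WittVector p k)) with hι
    -- construct coefficients of g
    have hc : ∀ m < n, ∃ c : WittVector p k, ι c = PowerSeries.coeff m f := by
      intro m hm
      obtain ⟨w, hw⟩ := hf m
      obtain ⟨u, hu⟩ := hfactU m hm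
      refine ⟨(u⁻¹ : _) * w, ?_⟩
      have hfne : ι ((Nat.factorial (m / e) : WittVector p k)) ≠ 0 := by
        intro h0
        exact ((hfactU m hm).map ι).ne_zero h0
      apply mul_right_cancel₀ hfne
      rw [map_mul]
      have : ι (u⁻¹ : _) * ι ((Nat.factorial (m / e) : WittVector p k)) = 1 := by
        rw [← map_mul, ← hu, Units.inv_mul, map_one]
      rw [mul_assoc, mul_comm (ι w), ← mul_assoc, this, one_mul, hw, map_natCast]
    choose c hcspec using hc
    set g : PowerSeries (WittVector p k) :=
      PowerSeries.mk (fun m => if h : m < n then c m h else 0) with hg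
    refine ⟨g, ?_, ?_⟩
    · intro m
      rw [map_sub, sub_mul]
      refine inW_sub p k ?_ ?_
      · obtain ⟨w, hw⟩ := hf m
        exact ⟨w, hw⟩
      · exact mem_pianoTilde_map p k e g m
    · intro m hm
      rw [map_sub, PowerSeries.coeff_map, hg, PowerSeries.coeff_mk, dif_pos hm,
        hcspec m hm, sub_self]
end
end

section
/- Let V be a discrete valuation ring with uniformizer π and fraction field F, let N be a finite-dimensional F-vector space equipped with a direct sum decomposition N = ⊕_{i∈I} N_i over a finite index set I, and let L be a finitely generated V-submodule of N. Let v ∈ L with components v_i ∈ N_i, and let (s_i)_{i∈I} be integers such that Σ_{i∈I} π^{n·s_i}·v_i ∈ L for every natural number n. Then v_i = 0 for every index i with s_i < 0. -/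
/-- Let `V` be a discrete valuation ring with uniformizer `π` and fraction
field `F`, let `N` be a finite-dimensional `F`-vector space equipped with a direct sum
decomposition `N = ⊕_{i ∈ I} N_i` over a finite index set `I`, and let `L` be a finitely
generated `V`-submodule of `N`.  Let `v ∈ L` with components `v_i ∈ N_i`, and let `(s_i)` be
integers such that `Σ_i π^{n·s_i} ⬝ v_i ∈ L` for every natural number `n`.  Then `v_i = 0` for
every index `i` with `s_i < 0`. -/
theorem component_zero_of_neg_exponent
    (V : Type*) [CommRing V] [IsDomain V] [IsDiscreteValuationRing V]
    (π : V) (hπ : Irreducible π)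
    (N : Type*) [AddCommGroup N] [Module (FractionRing V) N]
    [Module V N] [IsScalarTower V (FractionRing V) N]
    [FiniteDimensional (FractionRing V) N]
    (I : Type*) [Fintype I] [DecidableEq I]
    (Ni : I → Submodule (FractionRing V) N)
    (hNi : DirectSum.IsInternal Ni)
    (L : Submodule V N) (hL : L.FG)
    (c : I → N) (hc : ∀ i, c i ∈ Ni i)
    (hvL : (∑ i, c i) ∈ L)
    (s : I → ℤ)
    (hs : ∀ n : ℕ,
      (∑ i, (algebraMap V (FractionRing V) π) ^ ((n : ℤ) * s i) • c i) ∈ L) :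
    ∀ i, s i < 0 → c i = 0 := by
  intro i₀ hs₀
  by_contra hc₀
  set F := FractionRing V
  set π' : F := algebraMap V F π with hπ'
  have hπ0 : π ≠ 0 := hπ.ne_zero
  have hinj : Function.Injective (algebraMap V F) := IsFractionRing.injective V F
  have hπ'0 : π' ≠ 0 := fun h => hπ0 (hinj (h.trans (map_zero (algebraMap V F)).symm))
  -- a linear functional not vanishing on `c i₀`
  obtain ⟨φ, hφ⟩ : ∃ φ : Module.Dual F N, φ (c i₀) ≠ 0 := by
    by_contra h
    push_neg at h
    exact hc₀ ((Module.forall_dual_apply_eq_zero_iff F (c i₀)).mp h)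
  -- the linear functional `ψ` : project to `Ni i₀`, then apply `φ`
  let e := LinearEquiv.ofBijective (DirectSum.coeLinearMap Ni) hNi
  let ψ : N →ₗ[F] F :=
    φ ∘ₗ (Ni i₀).subtype ∘ₗ (DirectSum.component F I (fun i => Ni i) i₀)
      ∘ₗ e.symm.toLinearMap
  have hψ : ∀ j, ψ (c j) = if j = i₀ then φ (c i₀) else 0 := by
    intro j
    by_cases hj : j = i₀
    · subst hj
      simp only [ψ, LinearMap.comp_apply, LinearEquiv.coe_coe, if_pos rfl]
      rw [← DirectSum.apply_eq_component, hNi.ofBijective_coeLinearMap_of_mem (hc j)]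
      rfl
    · simp only [ψ, LinearMap.comp_apply, LinearEquiv.coe_coe, if_neg hj]
      rw [← DirectSum.apply_eq_component, hNi.ofBijective_coeLinearMap_of_mem_ne hj (hc j)]
      simp
  -- the image of L under ψ
  have hM : (L.map (ψ.restrictScalars V)).FG := hL.map _
  obtain ⟨a, haS, ha⟩ :=
    FractionalIdeal.isFractional_of_fg (S := nonZeroDivisors V) (P := F) hM
  have ha0 : a ≠ 0 := nonZeroDivisors.ne_zero haS
  -- denominator for φ (c i₀)
  obtain ⟨⟨p, q⟩, hpq⟩ := IsLocalization.surj (nonZeroDivisors V) (φ (c i₀))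
  have hp0 : p ≠ 0 := by
    rintro rfl
    simp only [map_zero] at hpq
    exact (mul_ne_zero hφ (fun h => nonZeroDivisors.ne_zero q.2 (hinj (by simpa using h)))) hpq
  -- the exponent
  set m : ℕ := (-s i₀).toNat with hm
  have hm' : (m : ℤ) = -s i₀ := Int.toNat_of_nonneg (by omega)
  have hm1 : 1 ≤ m := by omega
  -- key divisibility for every n
  have key : ∀ n : ℕ, π ^ (n * m) ∣ a * p := by
    intro n
    have hx : ψ (∑ i, π' ^ ((n : ℤ) * s i) • c i) ∈ L.map (ψ.restrictScalars V) :=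
      ⟨_, hs n, rfl⟩
    have hval : ψ (∑ i, π' ^ ((n : ℤ) * s i) • c i)
        = π' ^ ((n : ℤ) * s i₀) * φ (c i₀) := by
      rw [map_sum]
      rw [Finset.sum_eq_single i₀]
      · rw [map_smul, hψ, if_pos rfl, smul_eq_mul]
      · intro j _ hj
        rw [map_smul, hψ, if_neg hj, smul_zero]
      · intro h; exact absurd (Finset.mem_univ i₀) h
    obtain ⟨d, hd⟩ := ha _ hx
    rw [hval] at hd
    -- hd : algebraMap V F d = a • (π' ^ ((n:ℤ) * s i₀) * φ (c i₀))
    have hzpow : π' ^ ((n : ℤ) * s i₀) = (π' ^ (n * m))⁻¹ := by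
      rw [← zpow_natCast π' (n * m), ← zpow_neg]
      congr 1
      push_cast
      rw [hm']
      ring
    have heq : algebraMap V F (d * π ^ (n * m) * q) = algebraMap V F (a * p) := by
      rw [map_mul, map_mul, map_mul, map_pow, hd, Algebra.smul_def, hzpow]
      rw [← hpq, ← hπ']
      field_simp
      linear_combination (algebraMap V F a * φ (c i₀) * algebraMap V F (q : V)) * inv_mul_cancel₀ (pow_ne_zero (n * m) hπ'0)
    have := hinj heq
    exact ⟨d * q, by rw [← this]; ring⟩
  -- contradiction: π ^ k divides a * p for arbitrarily large k
  have hap0 : a * p ≠ 0 := mul_ne_zero ha0 hp0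
  obtain ⟨k, hk⟩ := IsDiscreteValuationRing.associated_pow_irreducible hap0 hπ
  obtain ⟨u, hu⟩ := hk
  have hdvd : π ^ ((k + 1) * m) ∣ π ^ k := hu ▸ (key (k + 1)).mul_right (u : V)
  have := (pow_dvd_pow_iff (hπ.ne_zero) hπ.not_isUnit).mp hdvd
  nlinarith [hm1, this]
end
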